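/- Let $g_{a,0}$ and $g_{a,M}$ denote the densities of the central $\chi^2_1$ and the noncentral $\chi^2_1(M^2/a)$ distributions. With $y_{a,M}$ as the $(1-e^{-v_{aa}(\varepsilon)})$-quantile of $G_{a,M}$, one has $g_{a,0}(y_{a,M})/g_{a,M}(y_{a,M})\to 1$ and, more strongly, $a^{1/4}\big(g_{a,0}(y_{a,M})/g_{a,M}(y_{a,M})-1\big)\to 0$ as $a\to\infty$. -/

import Mathlib

open MeasureTheory ProbabilityTheory Filter Real Set

/-- `ν̃_{ja} = ∑_{i=1}^j 1/(a-i+1)`; in particular `ν̃_{aa}` is the harmonic number. -/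
noncomputable def nutilde (a j : ℕ) : ℝ :=
  ∑ i ∈ Finset.Icc 1 j, 1 / ((a : ℝ) - (i : ℝ) + 1)

/-- The noncentral chi-squared distribution with 1 degree of freedom and noncentrality
`M²/a`: the law of `(Z + M/√a)²` for `Z ∼ N(0,1)`. -/
noncomputable def ncChiSq (a : ℕ) (M : ℝ) : Measure ℝ :=
  Measure.map (fun z => (z + M / Real.sqrt a) ^ 2) (gaussianReal 0 1)

/-- The CDF of the noncentral χ²₁(M²/a) distribution. -/
noncomputable def ncCDF (a : ℕ) (M y : ℝ) : ℝ := ((ncChiSq a M) (Set.Iic y)).toReal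

/-- The density of the noncentral χ²₁(t²/a) distribution. -/
noncomputable def ncPDF (a : ℕ) (t y : ℝ) : ℝ :=
  Real.exp (-(y + t ^ 2 / a) / 2) * y ^ (-(1:ℝ) / 2) / Real.sqrt 2 *
    ∑' k : ℕ, (t ^ 2 * y / a) ^ k /
      (4 ^ k * Nat.factorial k * Real.Gamma ((k : ℝ) + 1 / 2))


lemma gamma_fact (k : ℕ) : (4:ℝ)^k * (Nat.factorial k) * Real.Gamma ((k:ℝ) + 1/2)
    = (Nat.factorial (2*k)) * Real.sqrt π := by
  induction k with
  | zero =>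
    norm_num
    exact Real.Gamma_one_half_eq
  | succ n ih =>
    have h1 : ((n:ℝ) + 1) + 1/2 = ((n:ℝ) + 1/2) + 1 := by ring
    have h2 : Real.Gamma (((n:ℕ) + 1 : ℕ) + 1/2) = ((n:ℝ) + 1/2) * Real.Gamma ((n:ℝ) + 1/2) := by
      push_cast
      rw [h1, Real.Gamma_add_one (by positivity)]
    rw [h2]
    have h3 : (Nat.factorial (2*(n+1)) : ℝ) = (2*n+2) * (2*n+1) * Nat.factorial (2*n) := by
      have : 2*(n+1) = (2*n+1) + 1 := by ring
      rw [this, Nat.factorial_succ, Nat.factorial_succ]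
      push_cast; ring
    rw [h3]
    have h4 : ((Nat.factorial (n+1)) : ℝ) = (n+1) * Nat.factorial n := by
      rw [Nat.factorial_succ]; push_cast; ring
    rw [h4]
    push_cast
    linear_combination (4*((n:ℝ)+1)*((n:ℝ)+1/2)) * ih

noncomputable def Tfun (x : ℝ) : ℝ := ∑' k : ℕ, x ^ k / (Nat.factorial (2*k))

lemma Tfun_summable {x : ℝ} (hx : 0 ≤ x) :
    Summable (fun k : ℕ => x ^ k / (Nat.factorial (2*k))) := by
  refine Summable.of_nonneg_of_le (fun k => by positivity) (fun k => ?_)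
    (Real.summable_pow_div_factorial x)
  exact div_le_div_of_nonneg_left (by positivity) (by positivity)
    (by exact_mod_cast Nat.factorial_le (by omega))

lemma one_le_Tfun {x : ℝ} (hx : 0 ≤ x) : 1 ≤ Tfun x := by
  have h := Summable.le_tsum (Tfun_summable hx) 0 (fun j _ => by positivity)
  simpa [Tfun] using h

lemma Tfun_le {x : ℝ} (hx : 0 ≤ x) (hx2 : x ≤ 1/2) : Tfun x ≤ 1 + 2*x := by
  have hsum := Tfun_summable hx
  rw [Tfun, Summable.tsum_eq_zero_add hsum]
  simp only [pow_zero, Nat.mul_zero, Nat.factorial_zero, Nat.cast_one, div_one]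
  have hgeo : Summable (fun k : ℕ => x * (1/2:ℝ)^k) :=
    (summable_geometric_of_lt_one (by norm_num) (by norm_num)).mul_left x
  have hle : ∀ k : ℕ, x ^ (k+1) / (Nat.factorial (2*(k+1))) ≤ x * (1/2)^k := by
    intro k
    have h1 : x ^ (k+1) / (Nat.factorial (2*(k+1))) ≤ x ^ (k+1) := by
      refine div_le_self (by positivity) ?_
      exact_mod_cast Nat.one_le_iff_ne_zero.mpr (Nat.factorial_ne_zero _)
    refine h1.trans ?_
    rw [pow_succ, mul_comm]
    exact mul_le_mul_of_nonneg_left (pow_le_pow_left₀ hx hx2 k) hx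
  have h2 : ∑' k : ℕ, x ^ (k+1) / (Nat.factorial (2*(k+1))) ≤ ∑' k : ℕ, x * (1/2:ℝ)^k := by
    refine Summable.tsum_le_tsum hle ?_ hgeo
    exact (summable_nat_add_iff 1).mpr hsum
  have h3 : ∑' k : ℕ, x * (1/2:ℝ)^k = 2 * x := by
    rw [tsum_mul_left, tsum_geometric_two]; ring
  linarith [h2, h3.le]


lemma ncPDF_zero (a : ℕ) (y : ℝ) :
    ncPDF a 0 y = Real.exp (-y/2) * y ^ (-(1:ℝ)/2) / Real.sqrt 2 * (1 / Real.sqrt π) := by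
  rw [ncPDF]
  have h : ∑' k : ℕ, ((0:ℝ) ^ 2 * y / a) ^ k /
      (4 ^ k * Nat.factorial k * Real.Gamma ((k : ℝ) + 1 / 2)) = 1 / Real.sqrt π := by
    rw [tsum_eq_single 0 (fun k hk => by simp [zero_pow hk])]
    norm_num
    exact Real.Gamma_one_half_eq
  rw [h]
  norm_num

lemma ncPDF_eq (a : ℕ) (M y : ℝ) :
    ncPDF a M y = Real.exp (-(y + M^2/a)/2) * y ^ (-(1:ℝ)/2) / Real.sqrt 2 *
      ((1/Real.sqrt π) * Tfun (M^2 * y / a)) := by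
  have hterm : ∀ k : ℕ, (M^2 * y / a) ^ k /
      (4 ^ k * Nat.factorial k * Real.Gamma ((k : ℝ) + 1 / 2)) =
      (1/Real.sqrt π) * ((M^2 * y / a) ^ k / (Nat.factorial (2*k))) := by
    intro k
    rw [gamma_fact k]
    have hπ : Real.sqrt π ≠ 0 := by positivity
    have hf : ((Nat.factorial (2*k)):ℝ) ≠ 0 := by positivity
    field_simp
  rw [ncPDF, tsum_congr hterm, tsum_mul_left, Tfun]

lemma ratio_eq (a : ℕ) (M y : ℝ) (hy : 0 < y) (hx : 0 ≤ M^2 * y / a) :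
    ncPDF a 0 y / ncPDF a M y = Real.exp (M^2/a/2) / Tfun (M^2*y/a) := by
  rw [ncPDF_zero, ncPDF_eq]
  have hT : 0 < Tfun (M^2*y/a) := lt_of_lt_of_le one_pos (one_le_Tfun hx)
  have hexp : Real.exp (-(y + M^2/a)/2) = Real.exp (-y/2) * Real.exp (-(M^2/a)/2) := by
    rw [← Real.exp_add]; congr 1; ring
  rw [hexp]
  have hA : (0:ℝ) < Real.exp (-y/2) * y ^ (-(1:ℝ)/2) / Real.sqrt 2 * (1/Real.sqrt π) := by
    have h1 : (0:ℝ) < y ^ (-(1:ℝ)/2) := Real.rpow_pos_of_pos hy _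
    have h2 : (0:ℝ) < Real.sqrt π := Real.sqrt_pos.mpr Real.pi_pos
    positivity
  have hrw : Real.exp (-y/2) * Real.exp (-(M^2/a)/2) * y ^ (-(1:ℝ)/2) / Real.sqrt 2 *
      ((1/Real.sqrt π) * Tfun (M^2*y/a)) =
      (Real.exp (-y/2) * y ^ (-(1:ℝ)/2) / Real.sqrt 2 * (1/Real.sqrt π)) *
      (Real.exp (-(M^2/a)/2) * Tfun (M^2*y/a)) := by ring
  rw [hrw, div_mul_cancel_left₀ hA.ne', mul_inv, ← Real.exp_neg]
  rw [show -(-(M^2/(a:ℝ))/2) = M^2/(a:ℝ)/2 by ring]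
  ring


lemma integral_Ioi_mul_exp (t : ℝ) :
    ∫ x in Ioi t, x * Real.exp (-x^2/2) = Real.exp (-t^2/2) := by
  have hderiv : ∀ x ∈ Ioi t, HasDerivAt (fun x : ℝ => -Real.exp (-x^2/2))
      (x * Real.exp (-x^2/2)) x := by
    intro x _
    have h1 : HasDerivAt (fun x : ℝ => -x^2/2) (-x) x := by
      have h2 := ((hasDerivAt_pow 2 x).div_const 2).neg
      rw [show (fun x : ℝ => -x^2/2) = -fun x => x^2/2 by funext z; simp only [Pi.neg_apply]; ring]
      exact h2.congr_deriv (by norm_num)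
    have h3 := (Real.hasDerivAt_exp (-x^2/2)).comp x h1
    have h4 := h3.neg
    exact h4.congr_deriv (by ring)
  have hint : IntegrableOn (fun x => x * Real.exp (-x^2/2)) (Ioi t) := by
    have : (fun x : ℝ => x * Real.exp (-x^2/2)) = fun x => x * Real.exp (-(1/2) * x^2) := by
      ext x; ring_nf
    rw [this]
    exact (integrable_mul_exp_neg_mul_sq (by norm_num)).integrableOn
  have htend : Tendsto (fun x : ℝ => -Real.exp (-x^2/2)) atTop (nhds 0) := by
    rw [show (0:ℝ) = -0 by norm_num]
    refine Tendsto.neg ?_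
    refine Real.tendsto_exp_atBot.comp ?_
    have : Tendsto (fun x : ℝ => x^2/2) atTop atTop :=
      (tendsto_pow_atTop (two_ne_zero)).atTop_div_const (by norm_num)
    exact tendsto_neg_atBot_iff.mpr this |>.congr (fun x => by ring_nf)
  have hcont : ContinuousWithinAt (fun x : ℝ => -Real.exp (-x^2/2)) (Ici t) t := by
    exact Continuous.continuousWithinAt (by fun_prop)
  have := integral_Ioi_of_hasDerivAt_of_tendsto hcont hderiv hint htend
  rw [this]; ring

lemma gauss_Ici_le {t : ℝ} (ht : 1 ≤ t) :
    gaussianReal 0 1 (Ici t) ≤ ENNReal.ofReal (Real.exp (-t^2/2)) := by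
  rw [gaussianReal_apply_eq_integral 0 one_ne_zero (Ici t)]
  refine ENNReal.ofReal_le_ofReal ?_
  rw [integral_Ici_eq_integral_Ioi, ← integral_Ioi_mul_exp t]
  refine setIntegral_mono_on ?_ ?_ measurableSet_Ioi ?_
  · exact (integrable_gaussianPDFReal 0 1).integrableOn
  · have : (fun x : ℝ => x * Real.exp (-x^2/2)) = fun x => x * Real.exp (-(1/2) * x^2) := by
      ext x; ring_nf
    rw [this]
    exact (integrable_mul_exp_neg_mul_sq (by norm_num)).integrableOn
  · intro x hx
    rw [mem_Ioi] at hx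
    have hx1 : 1 ≤ x := le_trans ht hx.le
    rw [gaussianPDFReal]
    push_cast
    have h1 : (Real.sqrt (2 * π * 1))⁻¹ ≤ 1 := by
      rw [inv_le_one_iff₀]
      right
      rw [Real.one_le_sqrt]
      nlinarith [Real.pi_gt_three]
    have h2 : Real.exp (-(x - 0)^2/(2*1)) = Real.exp (-x^2/2) := by norm_num
    rw [h2]
    calc (Real.sqrt (2 * π * 1))⁻¹ * Real.exp (-x^2/2)
        ≤ 1 * Real.exp (-x^2/2) :=
          mul_le_mul_of_nonneg_right h1 (Real.exp_nonneg _)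
      _ ≤ x * Real.exp (-x^2/2) :=
          mul_le_mul_of_nonneg_right (by linarith) (Real.exp_nonneg _)

lemma gauss_symm (t : ℝ) : gaussianReal 0 1 (Iic (-t)) = gaussianReal 0 1 (Ici t) := by
  have hmap := gaussianReal_map_const_mul (μ := 0) (v := 1) (-1)
  have h1 : Measure.map (fun x : ℝ => -1 * x) (gaussianReal 0 1) = gaussianReal 0 1 := by
    rw [hmap]
    norm_num
  have h2 : (fun x : ℝ => -1 * x) ⁻¹' (Iic (-t)) = Ici t := by
    ext x
    simp only [mem_preimage, mem_Iic, mem_Ici]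
    constructor <;> intro h <;> linarith
  calc gaussianReal 0 1 (Iic (-t)) = (Measure.map (fun x : ℝ => -1 * x) (gaussianReal 0 1)) (Iic (-t)) := by rw [h1]
    _ = gaussianReal 0 1 ((fun x : ℝ => -1 * x) ⁻¹' (Iic (-t))) :=
        Measure.map_apply (by fun_prop) measurableSet_Iic
    _ = gaussianReal 0 1 (Ici t) := by rw [h2]


lemma ncChiSq_meas (a : ℕ) (M : ℝ) : Measurable (fun z : ℝ => (z + M / Real.sqrt a) ^ 2) := by
  fun_prop

instance ncChiSq_prob (a : ℕ) (M : ℝ) : IsProbabilityMeasure (ncChiSq a M) :=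
  Measure.isProbabilityMeasure_map (ncChiSq_meas a M).aemeasurable

lemma tail_eq (a : ℕ) (M y v : ℝ) (h : ncCDF a M y = 1 - Real.exp (-v)) :
    ((ncChiSq a M) (Ioi y)).toReal = Real.exp (-v) := by
  have h1 : (ncChiSq a M) (Ioi y) = 1 - (ncChiSq a M) (Iic y) := by
    rw [← compl_Iic]
    exact prob_compl_eq_one_sub measurableSet_Iic
  rw [h1, ENNReal.toReal_sub_of_le prob_le_one ENNReal.one_ne_top]
  rw [ENNReal.toReal_one]
  have : ((ncChiSq a M) (Iic y)).toReal = 1 - Real.exp (-v) := h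
  rw [this]; ring

lemma quantile_le (a : ℕ) (ha : 1 ≤ a) (M v : ℝ) {y : ℝ} (hM : 0 ≤ M) (hv : 0 ≤ v)
    (hy : 0 < y) (h : ncCDF a M y = 1 - Real.exp (-v)) :
    y ≤ 4*(v + Real.log 2) + 2*M^2/a + 2 := by
  have ha0 : (0:ℝ) < (a:ℝ) := by exact_mod_cast ha
  set δ : ℝ := M / Real.sqrt a with hδdef
  have hδ : 0 ≤ δ := div_nonneg hM (Real.sqrt_nonneg _)
  have hδsq : δ^2 = M^2 / a := by
    rw [hδdef, div_pow, Real.sq_sqrt ha0.le]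
  have hlog2 : 0 ≤ Real.log 2 := Real.log_nonneg (by norm_num)
  set t : ℝ := Real.sqrt y - δ with htdef
  have hsq : y = (t + δ)^2 := by
    rw [htdef]
    have h5 : Real.sqrt y - δ + δ = Real.sqrt y := by ring
    rw [h5, Real.sq_sqrt hy.le]
  have htsqrt : t = Real.sqrt y - δ := htdef
  clear_value t
  clear_value δ
  by_cases ht : 1 ≤ t
  · -- main case: tail bound
    have htail := tail_eq a M y v h
    have hsub : (fun z : ℝ => (z + δ) ^ 2) ⁻¹' (Ioi y) ⊆ Iic (-t) ∪ Ici t := by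
      intro z hz
      rw [mem_preimage, mem_Ioi] at hz
      have h1 : Real.sqrt y < |z + δ| := by
        rw [← Real.sqrt_sq_eq_abs]
        exact Real.sqrt_lt_sqrt hy.le hz
      have h2 : t < |z| := by
        rw [htsqrt]
        cases abs_cases (z + δ) with
        | inl hc => cases abs_cases z with
          | inl hc2 => linarith [hc.1, hc2.1]
          | inr hc2 => linarith [hc.1, hc2.1]
        | inr hc => cases abs_cases z with
          | inl hc2 => linarith [hc.1, hc2.1]
          | inr hc2 => linarith [hc.1, hc2.1]
      rcases abs_cases z with hc | hc
      · right; rw [mem_Ici]; linarith [hc.1]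
      · left; rw [mem_Iic]; linarith [hc.1]
    have hb : (ncChiSq a M) (Ioi y) ≤ ENNReal.ofReal (2 * Real.exp (-t^2/2)) := by
      rw [ncChiSq, Measure.map_apply (by fun_prop) measurableSet_Ioi, ← hδdef]
      refine le_trans (measure_mono hsub) ?_
      refine le_trans (measure_union_le _ _) ?_
      rw [gauss_symm]
      calc gaussianReal 0 1 (Ici t) + gaussianReal 0 1 (Ici t)
          ≤ ENNReal.ofReal (Real.exp (-t^2/2)) + ENNReal.ofReal (Real.exp (-t^2/2)) :=
            add_le_add (gauss_Ici_le ht) (gauss_Ici_le ht)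
        _ = ENNReal.ofReal (2 * Real.exp (-t^2/2)) := by
            rw [← ENNReal.ofReal_add (Real.exp_nonneg _) (Real.exp_nonneg _)]; ring_nf
    have hexple : Real.exp (-v) ≤ 2 * Real.exp (-t^2/2) := by
      rw [← htail]
      exact ENNReal.toReal_le_of_le_ofReal (by positivity) hb
    have ht2 : t^2 ≤ 2*(v + Real.log 2) := by
      have h2 : 2 * Real.exp (-t^2/2) = Real.exp (Real.log 2 + -t^2/2) := by
        rw [Real.exp_add, Real.exp_log two_pos]
      rw [h2] at hexple
      have := Real.exp_le_exp.mp hexple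
      linarith
    rw [hsq]
    have e1 : (t+δ)^2 = t^2 + 2*t*δ + δ^2 := by ring
    have e3 : (t-δ)^2 = t^2 - 2*t*δ + δ^2 := by ring
    have e2 : 0 ≤ (t-δ)^2 := sq_nonneg _
    have e4 : 2*M^2/(a:ℝ) = 2*(M^2/(a:ℝ)) := by ring
    rw [e1, e4]
    linarith [ht2, hδsq]
  · push_neg at ht
    rw [hsq]
    have h0 : 0 ≤ t + δ := by
      rw [htsqrt, show Real.sqrt y - δ + δ = Real.sqrt y by ring]
      exact Real.sqrt_nonneg y
    have hprod : 0 < (1 - t) * (1 + t + 2*δ) :=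
      mul_pos (by linarith) (by linarith)
    have e4 : 2*M^2/(a:ℝ) = 2*(M^2/(a:ℝ)) := by ring
    rw [e4]
    nlinarith [hprod, hδsq, hδ, hv, hlog2, sq_nonneg (1 - δ)]


lemma nutilde_nonneg (a : ℕ) : 0 ≤ nutilde a a := by
  refine Finset.sum_nonneg (fun i hi => ?_)
  rw [Finset.mem_Icc] at hi
  have h1 : (i:ℝ) ≤ (a:ℝ) := by exact_mod_cast hi.2
  have h2 : (0:ℝ) < (a:ℝ) - (i:ℝ) + 1 := by linarith
  positivity

lemma nutilde_eq_harmonic (a : ℕ) : nutilde a a = (harmonic a : ℝ) := by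
  rw [nutilde, harmonic_eq_sum_Icc]
  push_cast
  refine Finset.sum_nbij' (fun i => a + 1 - i) (fun i => a + 1 - i) ?_ ?_ ?_ ?_ ?_
  · intro i hi
    simp only [Finset.mem_Icc] at hi ⊢
    omega
  · intro i hi
    simp only [Finset.mem_Icc] at hi ⊢
    omega
  · intro i hi
    simp only [Finset.mem_Icc] at hi
    omega
  · intro i hi
    simp only [Finset.mem_Icc] at hi
    omega
  · intro i hi
    rw [Finset.mem_Icc] at hi
    have h1 : ((a + 1 - i : ℕ) : ℝ) = (a:ℝ) - (i:ℝ) + 1 := by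
      have : i ≤ a + 1 := by omega
      push_cast [Nat.cast_sub this]
      ring
    rw [h1]
    simp

lemma nutilde_le (a : ℕ) : nutilde a a ≤ 1 + Real.log a := by
  rw [nutilde_eq_harmonic]
  exact harmonic_le_one_add_log a



set_option maxHeartbeats 2000000 in
/-- With `y_{a,M} = G_{a,M}⁻¹(1 - e^{-v_{aa}(ε)})`, `v_{aa}(ε) = ν̃_{aa} + √(2/ε)`:
`g_{a,0}(y_{a,M})/g_{a,M}(y_{a,M}) → 1`, and moreover
`a^{1/4}(g_{a,0}(y_{a,M})/g_{a,M}(y_{a,M}) - 1) → 0` as `a → ∞`. -/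
theorem density_ratio_tendsto_one (ε M : ℝ) (hε0 : 0 < ε) (hε1 : ε < 1) (hM : 0 ≤ M)
    (y : ℕ → ℝ)
    (hy : ∀ a : ℕ, 1 ≤ a → 0 < y a ∧
      ncCDF a M (y a) = 1 - Real.exp (-(nutilde a a + Real.sqrt (2 / ε)))) :
    Tendsto (fun a : ℕ => ncPDF a 0 (y a) / ncPDF a M (y a)) atTop (nhds 1) ∧
    Tendsto (fun a : ℕ => (a : ℝ) ^ ((1:ℝ) / 4) *
      (ncPDF a 0 (y a) / ncPDF a M (y a) - 1)) atTop (nhds 0) := by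
  have hsqε : 0 ≤ Real.sqrt (2/ε) := Real.sqrt_nonneg _
  have hlog2 : 0 ≤ Real.log 2 := Real.log_nonneg one_le_two
  obtain ⟨K, hKdef⟩ : ∃ K : ℝ, K = 4*(1 + Real.sqrt (2/ε) + Real.log 2) + 2*M^2 + 2 :=
    ⟨_, rfl⟩
  have hK : 0 ≤ K := by nlinarith [sq_nonneg M]
  obtain ⟨C₂, hC2def⟩ : ∃ C : ℝ, C = M^2*(4+K) := ⟨_, rfl⟩
  have hC2 : 0 ≤ C₂ := by nlinarith [sq_nonneg M]
  obtain ⟨C₃, hC3def⟩ : ∃ C : ℝ, C = M^2*Real.exp (M^2/2)/2 + 2*C₂ := ⟨_, rfl⟩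
  have hC3 : 0 ≤ C₃ := by
    have h1 : 0 ≤ M^2 * Real.exp (M^2/2) :=
      mul_nonneg (sq_nonneg M) (Real.exp_pos (M^2/2)).le
    nlinarith
  set E : ℕ → ℝ := fun a => (Real.log a + 1)/(a:ℝ)^((3:ℝ)/4) with hEdef
  have hF : Tendsto (fun x : ℝ => (Real.log x + 1)/x^((3:ℝ)/4)) atTop (nhds 0) := by
    have h1 : Tendsto (fun x : ℝ => Real.log x / x^((3:ℝ)/4)) atTop (nhds 0) :=
      (isLittleO_log_rpow_atTop (by norm_num : (0:ℝ) < 3/4)).tendsto_div_nhds_zero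
    have h2 : Tendsto (fun x : ℝ => 1 / x^((3:ℝ)/4)) atTop (nhds 0) := by
      have h3 : Tendsto (fun x : ℝ => x ^ (-((3:ℝ)/4))) atTop (nhds 0) :=
        tendsto_rpow_neg_atTop (by norm_num)
      refine h3.congr' ?_
      filter_upwards [eventually_gt_atTop (0:ℝ)] with x hx
      rw [Real.rpow_neg hx.le, one_div]
    have h4 := h1.add h2
    rw [add_zero] at h4
    refine h4.congr (fun x => ?_)
    rw [← add_div]
  have hE : Tendsto E atTop (nhds 0) := hF.comp tendsto_natCast_atTop_atTop
  have hC2E : Tendsto (fun a : ℕ => C₂ * E a) atTop (nhds 0) := by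
    simpa using hE.const_mul C₂
  have hC3E : Tendsto (fun a : ℕ => C₃ * E a) atTop (nhds 0) := by
    simpa using hE.const_mul C₃
  have hyle : ∀ a : ℕ, 1 ≤ a → y a ≤ 4*Real.log a + K := by
    intro a ha
    have h1a : (1:ℝ) ≤ (a:ℝ) := by exact_mod_cast ha
    obtain ⟨hy0, hcdf⟩ := hy a ha
    have hv0 : 0 ≤ nutilde a a + Real.sqrt (2/ε) := add_nonneg (nutilde_nonneg a) hsqε
    have h := quantile_le a ha M (nutilde a a + Real.sqrt (2/ε)) hM hv0 hy0 hcdf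
    have hn := nutilde_le a
    have hdiv : 2*M^2/(a:ℝ) ≤ 2*M^2 := div_le_self (by positivity) h1a
    rw [hKdef]
    linarith
  have hloga : ∀ a : ℕ, 1 ≤ a → 0 ≤ Real.log a := by
    intro a ha
    exact Real.log_nonneg (by exact_mod_cast ha)
  have hxleB : ∀ a : ℕ, 1 ≤ a → M^2 * y a / a ≤ C₂ * (Real.log a + 1) / a := by
    intro a ha
    have h1a : (1:ℝ) ≤ (a:ℝ) := by exact_mod_cast ha
    have hapos : (0:ℝ) < (a:ℝ) := lt_of_lt_of_le zero_lt_one h1a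
    refine div_le_div_of_nonneg_right ?_ hapos.le
    have h5 := mul_le_mul_of_nonneg_left (hyle a ha) (sq_nonneg M)
    have h6 : 0 ≤ M^2*K*Real.log a :=
      mul_nonneg (mul_nonneg (sq_nonneg M) hK) (hloga a ha)
    have h7 : 0 ≤ M^2*K := mul_nonneg (sq_nonneg M) hK
    rw [hC2def]
    nlinarith [sq_nonneg M]
  have ha34 : ∀ a : ℕ, 1 ≤ a → (a:ℝ)^((3:ℝ)/4) ≤ (a:ℝ) := by
    intro a ha
    have h1a : (1:ℝ) ≤ (a:ℝ) := by exact_mod_cast ha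
    calc (a:ℝ)^((3:ℝ)/4) ≤ (a:ℝ)^((1:ℝ)) :=
          Real.rpow_le_rpow_of_exponent_le h1a (by norm_num)
      _ = (a:ℝ) := Real.rpow_one _
  have hBE : ∀ (D : ℝ) (a : ℕ), 0 ≤ D → 1 ≤ a → D * (Real.log a + 1) / a ≤ D * E a := by
    intro D a hD ha
    have h1a : (1:ℝ) ≤ (a:ℝ) := by exact_mod_cast ha
    have hapos : (0:ℝ) < (a:ℝ) := lt_of_lt_of_le zero_lt_one h1a
    have h34pos : (0:ℝ) < (a:ℝ)^((3:ℝ)/4) := Real.rpow_pos_of_pos hapos _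
    have hnum : 0 ≤ D * (Real.log a + 1) := by
      have := hloga a ha
      nlinarith
    rw [hEdef]
    simp only []
    rw [mul_div_assoc']
    exact div_le_div_of_nonneg_left hnum h34pos (ha34 a ha)
  have hxhalf : ∀ᶠ a : ℕ in atTop, M^2 * y a / a ≤ 1/2 := by
    have hev : ∀ᶠ a : ℕ in atTop, C₂ * E a ≤ 1/2 :=
      hC2E.eventually (eventually_le_nhds (by norm_num))
    filter_upwards [hev, eventually_ge_atTop 1] with a h1 h2
    calc M^2 * y a / a ≤ C₂ * (Real.log a + 1) / a := hxleB a h2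
      _ ≤ C₂ * E a := hBE C₂ a hC2 h2
      _ ≤ 1/2 := h1
  have hbound : ∀ᶠ a : ℕ in atTop,
      |ncPDF a 0 (y a) / ncPDF a M (y a) - 1| ≤ C₃ * (Real.log a + 1) / a := by
    filter_upwards [hxhalf, eventually_ge_atTop 1] with a hhalf ha
    have h1a : (1:ℝ) ≤ (a:ℝ) := by exact_mod_cast ha
    have hapos : (0:ℝ) < (a:ℝ) := lt_of_lt_of_le zero_lt_one h1a
    obtain ⟨hy0, hcdf⟩ := hy a ha
    have hxnn : 0 ≤ M^2 * y a / a :=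
      div_nonneg (mul_nonneg (sq_nonneg M) hy0.le) (Nat.cast_nonneg a)
    have hr := ratio_eq a M (y a) hy0 hxnn
    rw [hr]
    obtain ⟨x, hxdef⟩ : ∃ x : ℝ, x = M^2 * y a / a := ⟨_, rfl⟩
    obtain ⟨c, hcdef⟩ : ∃ c : ℝ, c = M^2/(a:ℝ) := ⟨_, rfl⟩
    rw [← hxdef] at hxnn hhalf ⊢
    rw [show M^2/(a:ℝ)/2 = c/2 by rw [hcdef]]
    have hc : 0 ≤ c := by rw [hcdef]; positivity
    have hT1 : 1 ≤ Tfun x := one_le_Tfun hxnn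
    have hTle : Tfun x ≤ 1 + 2*x := Tfun_le hxnn hhalf
    have hTpos : 0 < Tfun x := lt_of_lt_of_le one_pos hT1
    have hexp1 : 1 ≤ Real.exp (c/2) := Real.one_le_exp (by linarith)
    have hup : Real.exp (c/2)/Tfun x - 1 ≤ (c/2)*Real.exp (c/2) := by
      have h1 : Real.exp (c/2)/Tfun x ≤ Real.exp (c/2) :=
        div_le_self (Real.exp_nonneg _) hT1
      have hkey := Real.add_one_le_exp (-(c/2))
      have hmul : Real.exp (-(c/2)) * Real.exp (c/2) = 1 := by
        rw [← Real.exp_add]; simp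
      have h9 := mul_le_mul_of_nonneg_right hkey (Real.exp_nonneg (c/2))
      rw [hmul] at h9
      nlinarith
    have hlo : 1 - Real.exp (c/2)/Tfun x ≤ 2*x := by
      have hpos : (0:ℝ) < 1 + 2*x := by linarith
      have h1 : 1/(1+2*x) ≤ Real.exp (c/2)/Tfun x :=
        div_le_div₀ (Real.exp_nonneg _) hexp1 hTpos hTle
      have h4 : (1:ℝ) - 1/(1+2*x) = 2*x/(1+2*x) := by field_simp; ring
      have h5 : 2*x/(1+2*x) ≤ 2*x := div_le_self (by linarith) (by linarith)
      linarith
    have hcb : (c/2)*Real.exp (c/2) ≤ M^2*Real.exp (M^2/2)/2 * (1/(a:ℝ)) := by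
      have hc2 : c/2 ≤ M^2/2 := by
        rw [hcdef]
        have := div_le_self (sq_nonneg M) h1a
        linarith
      have hexpm : Real.exp (c/2) ≤ Real.exp (M^2/2) := Real.exp_le_exp.mpr hc2
      have h10 : (c/2)*Real.exp (c/2) ≤ (c/2)*Real.exp (M^2/2) :=
        mul_le_mul_of_nonneg_left hexpm (by linarith)
      refine h10.trans ?_
      rw [hcdef, show M^2/(a:ℝ)/2*Real.exp (M^2/2) = M^2*Real.exp (M^2/2)/2 * (1/(a:ℝ)) by ring]
    have hxb : 2*x ≤ 2*(C₂*(Real.log a + 1)/a) := by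
      have h11 := hxleB a ha
      rw [← hxdef] at h11
      linarith [h11]
    have h2log : 0 ≤ Real.log a := hloga a ha
    have hone : 1/(a:ℝ) ≤ (Real.log a + 1)/a :=
      div_le_div_of_nonneg_right (by linarith) hapos.le
    have hA : (c/2)*Real.exp (c/2) ≤ M^2*Real.exp (M^2/2)/2 * ((Real.log a + 1)/(a:ℝ)) :=
      hcb.trans (mul_le_mul_of_nonneg_left hone (by positivity))
    have hsplit : C₃ * (Real.log a + 1) / a
        = 2*(C₂*(Real.log a + 1)/a) + M^2*Real.exp (M^2/2)/2 * ((Real.log a + 1)/(a:ℝ)) := by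
      rw [hC3def]; ring
    have hmono : 2*x ≤ C₃ * (Real.log a + 1) / a := by
      have h12 : 0 ≤ M^2*Real.exp (M^2/2)/2 * ((Real.log a + 1)/(a:ℝ)) :=
        mul_nonneg (by positivity) (div_nonneg (by linarith) hapos.le)
      linarith
    refine abs_le.mpr ⟨?_, ?_⟩
    · have h13 : 0 ≤ (c/2)*Real.exp (c/2) := by positivity
      linarith
    · linarith
  -- conclude
  have hEb : ∀ᶠ a : ℕ in atTop, C₃ * (Real.log a + 1) / a ≤ C₃ * E a := by
    filter_upwards [eventually_ge_atTop 1] with a ha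
    exact hBE C₃ a hC3 ha
  have habs1 : ∀ᶠ a : ℕ in atTop,
      |ncPDF a 0 (y a) / ncPDF a M (y a) - 1| ≤ C₃ * E a := by
    filter_upwards [hbound, hEb] with a h1 h2 using h1.trans h2
  have hsub : Tendsto (fun a : ℕ => ncPDF a 0 (y a) / ncPDF a M (y a) - 1) atTop (nhds 0) := by
    refine tendsto_of_tendsto_of_tendsto_of_le_of_le' (g := fun a => -(C₃ * E a))
      (h := fun a => C₃ * E a) (by simpa using hC3E.neg) hC3E ?_ ?_
    · filter_upwards [habs1] with a h using (abs_le.mp h).1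
    · filter_upwards [habs1] with a h using (abs_le.mp h).2
  constructor
  · have := hsub.add_const 1
    rw [zero_add] at this
    refine this.congr (fun a => by ring)
  · -- second limit
    have hquart : ∀ᶠ a : ℕ in atTop,
        |(a:ℝ) ^ ((1:ℝ)/4) * (ncPDF a 0 (y a) / ncPDF a M (y a) - 1)| ≤ C₃ * E a := by
      filter_upwards [hbound, eventually_ge_atTop 1] with a h1 ha
      have h1a : (1:ℝ) ≤ (a:ℝ) := by exact_mod_cast ha
      have hapos : (0:ℝ) < (a:ℝ) := lt_of_lt_of_le zero_lt_one h1a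
      have hqnn : 0 ≤ (a:ℝ) ^ ((1:ℝ)/4) := Real.rpow_nonneg hapos.le _
      rw [abs_mul, abs_of_nonneg hqnn]
      have hmulid : (a:ℝ)^((1:ℝ)/4) * (a:ℝ)^((3:ℝ)/4) = (a:ℝ) := by
        rw [← Real.rpow_add hapos]; norm_num
      have h34pos : (0:ℝ) < (a:ℝ)^((3:ℝ)/4) := Real.rpow_pos_of_pos hapos _
      have hid : (a:ℝ)^((1:ℝ)/4) * (C₃*(Real.log a + 1)/(a:ℝ)) = C₃ * E a := by
        rw [hEdef]
        simp only []
        field_simp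
        linear_combination C₃ * hmulid
      calc (a:ℝ) ^ ((1:ℝ)/4) * |ncPDF a 0 (y a) / ncPDF a M (y a) - 1|
          ≤ (a:ℝ) ^ ((1:ℝ)/4) * (C₃*(Real.log a + 1)/(a:ℝ)) :=
            mul_le_mul_of_nonneg_left h1 hqnn
        _ = C₃ * E a := hid
    refine tendsto_of_tendsto_of_tendsto_of_le_of_le' (g := fun a => -(C₃ * E a))
      (h := fun a => C₃ * E a) (by simpa using hC3E.neg) hC3E ?_ ?_
    · filter_upwards [hquart] with a h using (abs_le.mp h).1
    · filter_upwards [hquart] with a h using (abs_le.mp h).2
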